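/- For a proper subdomain G of ℝⁿ and all x, y ∈ G, tanh(j_G(x,y)/2) ≤ p_G(x,y) ≤ tanh(j_G(x,y)). -/

import Mathlib

open Metric Set

noncomputable def dd {n : ℕ} (G : Set (EuclideanSpace ℝ (Fin n))) (x : EuclideanSpace ℝ (Fin n)) : ℝ :=
  Metric.infDist x (frontier G)

noncomputable def jMet {n : ℕ} (G : Set (EuclideanSpace ℝ (Fin n))) (x y : EuclideanSpace ℝ (Fin n)) : ℝ :=
  Real.log (1 + dist x y / min (dd G x) (dd G y))

noncomputable def jStar {n : ℕ} (G : Set (EuclideanSpace ℝ (Fin n))) (x y : EuclideanSpace ℝ (Fin n)) : ℝ :=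
  Real.tanh (jMet G x y / 2)

noncomputable def sMet {n : ℕ} (G : Set (EuclideanSpace ℝ (Fin n))) (x y : EuclideanSpace ℝ (Fin n)) : ℝ :=
  ⨆ z : frontier G, dist x y / (dist x (z : EuclideanSpace ℝ (Fin n)) + dist (z : EuclideanSpace ℝ (Fin n)) y)

noncomputable def pMet {n : ℕ} (G : Set (EuclideanSpace ℝ (Fin n))) (x y : EuclideanSpace ℝ (Fin n)) : ℝ :=
  dist x y / Real.sqrt (dist x y ^ 2 + 4 * dd G x * dd G y)

noncomputable def vMet {n : ℕ} (G : Set (EuclideanSpace ℝ (Fin n))) (x y : EuclideanSpace ℝ (Fin n)) : ℝ :=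
  ⨆ z : frontier G, EuclideanGeometry.angle x (z : EuclideanSpace ℝ (Fin n)) y

lemma tanh_eq_exp (z : ℝ) :
    Real.tanh z = (Real.exp (2 * z) - 1) / (Real.exp (2 * z) + 1) := by
  rw [Real.tanh_eq_sinh_div_cosh, Real.sinh_eq, Real.cosh_eq]
  have h2 : Real.exp (2 * z) = Real.exp z * Real.exp z := by
    rw [two_mul, Real.exp_add]
  have h1 : Real.exp z * Real.exp (-z) = 1 := by
    rw [← Real.exp_add]; simp
  have hz := Real.exp_pos z
  have hz2 := Real.exp_pos (2 * z)
  field_simp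
  rw [mul_comm z 2, h2]
  nlinarith [Real.exp_pos (-z), congrArg (fun w => w * Real.exp z) h1]

set_option maxHeartbeats 1000000 in
theorem stmt8 {n : ℕ} (G : Set (EuclideanSpace ℝ (Fin n)))
    (hGo : IsOpen G) (hGc : IsConnected G) (hGne : G ≠ univ)
    (x y : EuclideanSpace ℝ (Fin n)) (hx : x ∈ G) (hy : y ∈ G) :
    Real.tanh (jMet G x y / 2) ≤ pMet G x y ∧ pMet G x y ≤ Real.tanh (jMet G x y) := by
  have hfne : (frontier G).Nonempty :=
    nonempty_frontier_iff.mpr ⟨hGc.nonempty, hGne⟩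
  have hdpos : ∀ z ∈ G, 0 < dd G z := by
    intro z hz
    refine (isClosed_frontier.notMem_iff_infDist_pos hfne).mp ?_
    rw [hGo.frontier_eq]
    exact fun h => h.2 hz
  have hdx := hdpos x hx
  have hdy := hdpos y hy
  set dX := dd G x with hdX
  set dY := dd G y with hdY
  set t := dist x y with ht
  have ht0 : 0 ≤ t := dist_nonneg
  have hlip1 : dX ≤ dY + t := Metric.infDist_le_infDist_add_dist
  have hlip2 : dY ≤ dX + t := by
    have := Metric.infDist_le_infDist_add_dist (x := y) (y := x) (s := frontier G)
    rwa [dist_comm] at this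
  set m := min dX dY with hm
  have hm0 : 0 < m := lt_min hdx hdy
  have hmx : m ≤ dX := min_le_left _ _
  have hmy : m ≤ dY := min_le_right _ _
  have hprod : dX * dY ≤ m * (m + t) := by
    rcases min_cases dX dY with ⟨h1, h2⟩ | ⟨h1, h2⟩
    · rw [hm, h1]; nlinarith
    · rw [hm, h1]; nlinarith
  have hprodm : m * m ≤ dX * dY := by nlinarith
  -- exp of jMet
  have hu : 0 < 1 + t / m := by positivity
  have hexpj : Real.exp (jMet G x y) = 1 + t / m := by
    rw [jMet, Real.exp_log hu]
  -- value of tanh (j/2)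
  have h1 : Real.tanh (jMet G x y / 2) = t / (2 * m + t) := by
    rw [tanh_eq_exp]
    have : 2 * (jMet G x y / 2) = jMet G x y := by ring
    rw [this, hexpj]
    rw [div_eq_div_iff (by positivity) (by positivity)]
    field_simp
    try ring
    try exact Or.inl trivial
  have h2 : Real.tanh (jMet G x y) = t * (t + 2 * m) / (t ^ 2 + 2 * m * t + 2 * m ^ 2) := by
    rw [tanh_eq_exp]
    have h2j : Real.exp (2 * jMet G x y) = (1 + t / m) ^ 2 := by
      rw [two_mul, Real.exp_add, hexpj]; ring
    rw [h2j]
    rw [div_eq_div_iff (by positivity) (by positivity)]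
    field_simp
    ring
  set S := Real.sqrt (t ^ 2 + 4 * dX * dY) with hS
  have hS0 : 0 < S := Real.sqrt_pos.mpr (by nlinarith)
  have hSsq : S ^ 2 = t ^ 2 + 4 * dX * dY := Real.sq_sqrt (by nlinarith)
  have hP : pMet G x y = t / S := rfl
  constructor
  · rw [h1, hP]
    have hSle : S ≤ 2 * m + t := by
      rw [← Real.sqrt_sq (by positivity : (0:ℝ) ≤ 2 * m + t)]
      apply Real.sqrt_le_sqrt
      nlinarith
    exact div_le_div_of_nonneg_left ht0 hS0 hSle
  · rw [h2, hP]
    rcases eq_or_lt_of_le ht0 with h | htpos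
    · rw [← h]; simp
    have hSge : Real.sqrt (t ^ 2 + 4 * m ^ 2) ≤ S := by
      apply Real.sqrt_le_sqrt
      nlinarith [hprodm]
    have hkey : t ^ 2 + 2 * m * t + 2 * m ^ 2 ≤ (t + 2 * m) * S := by
      have h4 : (t ^ 2 + 2 * m * t + 2 * m ^ 2) ^ 2 ≤ ((t + 2 * m) * Real.sqrt (t ^ 2 + 4 * m ^ 2)) ^ 2 := by
        rw [mul_pow, Real.sq_sqrt (by positivity)]
        nlinarith
      have h5 : t ^ 2 + 2 * m * t + 2 * m ^ 2 ≤ (t + 2 * m) * Real.sqrt (t ^ 2 + 4 * m ^ 2) := by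
        have ha : (0:ℝ) ≤ t ^ 2 + 2 * m * t + 2 * m ^ 2 := by positivity
        have hb : (0:ℝ) ≤ (t + 2 * m) * Real.sqrt (t ^ 2 + 4 * m ^ 2) := by positivity
        have h6 := Real.sqrt_le_sqrt h4
        rwa [Real.sqrt_sq ha, Real.sqrt_sq hb] at h6
      calc t ^ 2 + 2 * m * t + 2 * m ^ 2 ≤ (t + 2 * m) * Real.sqrt (t ^ 2 + 4 * m ^ 2) := h5
        _ ≤ (t + 2 * m) * S := by
            apply mul_le_mul_of_nonneg_left hSge (by positivity)
    rw [div_le_div_iff₀ hS0 (by positivity)]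
    calc t * (t ^ 2 + 2 * m * t + 2 * m ^ 2) ≤ t * ((t + 2 * m) * S) := by
          apply mul_le_mul_of_nonneg_left hkey ht0
      _ = t * (t + 2 * m) * S := by ring
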